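/- For every mesh function W : {0,...,J} x {0,...,K} -> C with W_{0,k} = 0, W_{j,0} = 0 and W_{j,K} = 0 for all j, k, the quantity (W,W)_{omegaT_h, s_N} = (s_N W, W)_{omega_h} + ((s_N^- W)_J, W_J)_{omega_hy}*h_x is real and satisfies (W,W)_{omegaT_h, s_N} >= (1/3)*( ||W||_{omega_h}^2 + (h_x/2)*||W_J||_{omega_hy}^2 ), where ||W||_{omega_h}^2 = sum_{j=1}^{J-1} sum_{k=1}^{K-1} |W_{j,k}|^2*h_x*h_y and ||W_J||_{omega_hy}^2 = sum_{k=1}^{K-1} |W_{J,k}|^2*h_y. -/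

import Mathlib

noncomputable section

/-- Backward difference quotient in `x`: `(∂̄_x W)_{j,k} = (W_{j,k} - W_{j-1,k})/h_x`. -/
def dbx (hx : ℝ) (W : ℕ → ℕ → ℂ) : ℕ → ℕ → ℂ := fun j k => (W j k - W (j - 1) k) / (hx : ℂ)

/-- Second difference quotient in `x`. -/
def ddxF (hx : ℝ) (W : ℕ → ℕ → ℂ) : ℕ → ℕ → ℂ := fun j k =>
  (W (j + 1) k - 2 * W j k + W (j - 1) k) / (hx : ℂ) ^ 2

/-- Second difference quotient in `y`. -/
def ddyF (hy : ℝ) (W : ℕ → ℕ → ℂ) : ℕ → ℕ → ℂ := fun j k =>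
  (W j (k + 1) - 2 * W j k + W j (k - 1)) / (hy : ℂ) ^ 2

/-- `s_{Nx} = I + (h_x²/12) ∂_x ∂̄_x`. -/
def sNxF (hx : ℝ) (W : ℕ → ℕ → ℂ) : ℕ → ℕ → ℂ := fun j k =>
  W j k + ((hx ^ 2 / 12 : ℝ) : ℂ) * ddxF hx W j k

/-- `s_{Ny} = I + (h_y²/12) ∂_y ∂̄_y`. -/
def sNyF (hy : ℝ) (W : ℕ → ℕ → ℂ) : ℕ → ℕ → ℂ := fun j k =>
  W j k + ((hy ^ 2 / 12 : ℝ) : ℂ) * ddyF hy W j k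

/-- `s_N = I + (h_x²/12) ∂_x ∂̄_x + (h_y²/12) ∂_y ∂̄_y`. -/
def sNF (hx hy : ℝ) (W : ℕ → ℕ → ℂ) : ℕ → ℕ → ℂ := fun j k =>
  W j k + ((hx ^ 2 / 12 : ℝ) : ℂ) * ddxF hx W j k + ((hy ^ 2 / 12 : ℝ) : ℂ) * ddyF hy W j k

/-- `Δ_{hN} = s_{Ny} ∂_x ∂̄_x + s_{Nx} ∂_y ∂̄_y`. -/
def dHNF (hx hy : ℝ) (W : ℕ → ℕ → ℂ) : ℕ → ℕ → ℂ := fun j k =>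
  sNyF hy (ddxF hx W) j k + sNxF hx (ddyF hy W) j k

/-- `(s_{Nx}^- W)_{j,k} = (1/12) W_{j-1,k} + (5/12) W_{j,k}`. -/
def sNxm (W : ℕ → ℕ → ℂ) : ℕ → ℕ → ℂ := fun j k =>
  (1 / 12 : ℂ) * W (j - 1) k + (5 / 12 : ℂ) * W j k

/-- `(s_N^- W)_{j,k} = (s_{Nx}^- W)_{j,k} + (h_y²/24)(∂_y ∂̄_y W)_{j,k}`. -/
def sNm (hy : ℝ) (W : ℕ → ℕ → ℂ) : ℕ → ℕ → ℂ := fun j k =>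
  sNxm W j k + ((hy ^ 2 / 24 : ℝ) : ℂ) * ddyF hy W j k

/-- `(U,W)_{ω_h} = ∑_{j=1}^{J-1} ∑_{k=1}^{K-1} U_{j,k} conj(W_{j,k}) h_x h_y`. -/
def innO (J K : ℕ) (hx hy : ℝ) (U W : ℕ → ℕ → ℂ) : ℂ :=
  ∑ j ∈ Finset.Icc 1 (J - 1), ∑ k ∈ Finset.Icc 1 (K - 1),
    U j k * (starRingEnd ℂ) (W j k) * ((hx * hy : ℝ) : ℂ)

/-- `(U,W)_{ω̃_h} = ∑_{j=1}^{J} ∑_{k=1}^{K-1} U_{j,k} conj(W_{j,k}) h_x h_y`. -/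
def innT (J K : ℕ) (hx hy : ℝ) (U W : ℕ → ℕ → ℂ) : ℂ :=
  ∑ j ∈ Finset.Icc 1 J, ∑ k ∈ Finset.Icc 1 (K - 1),
    U j k * (starRingEnd ℂ) (W j k) * ((hx * hy : ℝ) : ℂ)

/-- `(Z,Z')_{ω_{hy}} = ∑_{k=1}^{K-1} Z_k conj(Z'_k) h_y`. -/
def innY (K : ℕ) (hy : ℝ) (Z Z' : ℕ → ℂ) : ℂ :=
  ∑ k ∈ Finset.Icc 1 (K - 1), Z k * (starRingEnd ℂ) (Z' k) * ((hy : ℝ) : ℂ)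

/-- `(U,W)_{ω̃_h, s_N} = (s_N U, W)_{ω_h} + ((s_N^- U)_J, W_J)_{ω_{hy}} h_x`. -/
def innSN (J K : ℕ) (hx hy : ℝ) (U W : ℕ → ℕ → ℂ) : ℂ :=
  innO J K hx hy (sNF hx hy U) W
    + innY K hy (fun k => sNm hy U J k) (fun k => W J k) * ((hx : ℝ) : ℂ)

/-- `(U,W)_{ω̃_h, s_{Nx}} = (s_{Nx} U, W)_{ω_h} + ((s_{Nx}^- U)_J, W_J)_{ω_{hy}} h_x`. -/
def innSNx (J K : ℕ) (hx hy : ℝ) (U W : ℕ → ℕ → ℂ) : ℂ :=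
  innO J K hx hy (sNxF hx U) W
    + innY K hy (fun k => sNxm U J k) (fun k => W J k) * ((hx : ℝ) : ℂ)


set_option autoImplicit false
set_option maxHeartbeats 1000000

private lemma mc (a : ℂ) : a * (starRingEnd ℂ) a = (‖a‖ : ℂ)^2 := by
  rw [Complex.mul_conj]; norm_cast; simp [Complex.normSq_eq_norm_sq]

private lemma mc2 (a b : ℂ) : (a - b) * ((starRingEnd ℂ) a - (starRingEnd ℂ) b) = (‖a - b‖ : ℂ)^2 := by
  rw [← map_sub]; exact mc _

private lemma cross (a b : ℂ) : a * (starRingEnd ℂ) b + b * (starRingEnd ℂ) a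
    = (‖a‖ : ℂ)^2 + (‖b‖ : ℂ)^2 - (‖a - b‖ : ℂ)^2 := by
  linear_combination mc a + mc b - mc2 a b

private lemma sum_split {M : Type*} [AddCommMonoid M] (n : ℕ) (hn : 1 ≤ n) (f : ℕ → M) :
    ∑ j ∈ Finset.Icc 1 n, f j = ∑ j ∈ Finset.Icc 1 (n-1), f j + f n := by
  have h1 : n - 1 + 1 = n := by omega
  rw [← h1, Finset.sum_Icc_succ_top (by omega)]
  simp

private lemma lemX (v : ℕ → ℂ) (hv0 : v 0 = 0) : ∀ n, 1 ≤ n →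
    (∑ j ∈ Finset.Icc 1 (n - 1),
        (v j + (1/12 : ℂ) * (v (j+1) - 2 * v j + v (j-1))) * (starRingEnd ℂ) (v j))
      + ((1/12 : ℂ) * v (n - 1) + (5/12 : ℂ) * v n) * (starRingEnd ℂ) (v n)
    = (((∑ j ∈ Finset.Icc 1 (n - 1), ‖v j‖^2) + 1/2 * ‖v n‖^2
       - 1/12 * ∑ j ∈ Finset.Icc 1 n, ‖v j - v (j-1)‖^2 : ℝ) : ℂ) := by
  intro n hn
  induction n, hn using Nat.le_induction with
  | base =>
    simp only [Nat.sub_self, Finset.Icc_self, Finset.sum_singleton, show (1:ℕ)-1 = 0 from rfl,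
      Finset.Icc_eq_empty_of_lt (by norm_num : (1:ℕ) > 0), Finset.sum_empty, hv0, sub_zero]
    push_cast
    linear_combination (5/12 : ℂ) * mc (v 1)
  | succ n hn ih =>
    simp only [Nat.add_sub_cancel] at *
    rw [sum_split n hn, sum_split n hn (f := fun j => ‖v j‖^2),
      sum_split (n+1) (by omega) (f := fun j => ‖v j - v (j-1)‖^2)]
    simp only [Nat.add_sub_cancel]
    push_cast at ih ⊢
    linear_combination ih + (5/12 : ℂ) * mc (v n) + (5/12 : ℂ) * mc (v (n+1))
      + (1/12 : ℂ) * cross (v (n+1)) (v n)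

private lemma lemY (w : ℕ → ℂ) (hw0 : w 0 = 0) : ∀ n, 1 ≤ n →
    ∑ k ∈ Finset.Icc 1 (n - 1), (w (k+1) - 2 * w k + w (k-1)) * (starRingEnd ℂ) (w k)
    = -(((∑ k ∈ Finset.Icc 1 (n - 1), ‖w k - w (k-1)‖^2 : ℝ)) : ℂ)
      + (w n - w (n - 1)) * (starRingEnd ℂ) (w (n - 1)) := by
  intro n hn
  induction n, hn using Nat.le_induction with
  | base =>
    simp [show (1:ℕ)-1 = 0 from rfl, Finset.Icc_eq_empty_of_lt (by norm_num : (1:ℕ) > 0), hw0]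
  | succ n hn ih =>
    simp only [Nat.add_sub_cancel] at *
    rw [sum_split n hn, sum_split n hn (f := fun k => ‖w k - w (k-1)‖^2)]
    push_cast at ih ⊢
    linear_combination ih - mc2 (w n) (w (n-1))

private lemma lemY' (w : ℕ → ℂ) (hw0 : w 0 = 0) (n : ℕ) (hn : 1 ≤ n) (hwn : w n = 0) :
    ∑ k ∈ Finset.Icc 1 (n - 1), (w (k+1) - 2 * w k + w (k-1)) * (starRingEnd ℂ) (w k)
    = -((((∑ k ∈ Finset.Icc 1 (n - 1), ‖w k - w (k-1)‖^2) + ‖w (n-1)‖^2 : ℝ)) : ℂ) := by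
  rw [lemY w hw0 n hn, hwn]
  push_cast
  linear_combination -mc (w (n-1))

private lemma lemIneqX (v : ℕ → ℂ) (hv0 : v 0 = 0) : ∀ n, 1 ≤ n →
    ∑ j ∈ Finset.Icc 1 n, ‖v j - v (j-1)‖^2
      ≤ 4 * ∑ j ∈ Finset.Icc 1 (n-1), ‖v j‖^2 + 2 * ‖v n‖^2 := by
  intro n hn
  induction n, hn using Nat.le_induction with
  | base =>
    simp only [show (1:ℕ)-1 = 0 from rfl, Finset.Icc_eq_empty_of_lt (by norm_num : (1:ℕ) > 0),
      Finset.sum_empty, Finset.Icc_self, Finset.sum_singleton, hv0, sub_zero]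
    nlinarith [sq_nonneg (‖v 1‖)]
  | succ n hn ih =>
    rw [sum_split (n+1) (by omega) (f := fun j => ‖v j - v (j-1)‖^2)]
    simp only [Nat.add_sub_cancel]
    rw [sum_split n hn (f := fun j => ‖v j‖^2)]
    have h2 : ‖v (n+1) - v n‖^2 ≤ 2*‖v (n+1)‖^2 + 2*‖v n‖^2 := by
      have := norm_sub_le (v (n+1)) (v n)
      nlinarith [norm_nonneg (v (n+1) - v n), norm_nonneg (v (n+1)), norm_nonneg (v n),
        sq_nonneg (‖v (n+1)‖ - ‖v n‖)]
    linarith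

private lemma lemIneqY (w : ℕ → ℂ) (hw0 : w 0 = 0) (n : ℕ) (hn : 2 ≤ n) :
    (∑ k ∈ Finset.Icc 1 (n - 1), ‖w k - w (k-1)‖^2) + ‖w (n-1)‖^2
      ≤ 4 * ∑ k ∈ Finset.Icc 1 (n-1), ‖w k‖^2 := by
  have h1 := lemIneqX w hw0 (n-1) (by omega)
  have h2 : ∑ k ∈ Finset.Icc 1 (n-1), ‖w k‖^2
      = ∑ k ∈ Finset.Icc 1 (n-1-1), ‖w k‖^2 + ‖w (n-1)‖^2 :=
    sum_split (n-1) (by omega) _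
  nlinarith [sq_nonneg (‖w (n-1)‖)]

private lemma L1 (J K : ℕ) (hx hy : ℝ) (hhx : hx ≠ 0) (hhy : hy ≠ 0) (W : ℕ → ℕ → ℂ) :
    innSN J K hx hy W W =
      (∑ j ∈ Finset.Icc 1 (J-1), ∑ k ∈ Finset.Icc 1 (K-1),
        ((((hx*hy : ℝ)):ℂ) * ((W j k + (1/12:ℂ)*(W (j+1) k - 2*W j k + W (j-1) k)) * (starRingEnd ℂ) (W j k))
          + (((hx*hy : ℝ)):ℂ)/12 * ((W j (k+1) - 2*W j k + W j (k-1)) * (starRingEnd ℂ) (W j k))))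
      + ∑ k ∈ Finset.Icc 1 (K-1),
        ((((hx*hy : ℝ)):ℂ) * (((1/12:ℂ)*W (J-1) k + (5/12:ℂ)*W J k) * (starRingEnd ℂ) (W J k))
          + (((hx*hy : ℝ)):ℂ)/24 * ((W J (k+1) - 2*W J k + W J (k-1)) * (starRingEnd ℂ) (W J k))) := by
  unfold innSN innO innY sNF sNm sNxm ddxF ddyF
  rw [Finset.sum_mul]
  have hx2 : (hx:ℂ) ≠ 0 := Complex.ofReal_ne_zero.mpr hhx
  have hy2 : (hy:ℂ) ≠ 0 := Complex.ofReal_ne_zero.mpr hhy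
  congr 1
  · apply Finset.sum_congr rfl
    intro j _
    apply Finset.sum_congr rfl
    intro k _
    push_cast
    field_simp
  · apply Finset.sum_congr rfl
    intro k _
    push_cast
    field_simp

private lemma L2 (J K : ℕ) (hx hy : ℝ) (W : ℕ → ℕ → ℂ) :
      (∑ j ∈ Finset.Icc 1 (J-1), ∑ k ∈ Finset.Icc 1 (K-1),
        ((((hx*hy : ℝ)):ℂ) * ((W j k + (1/12:ℂ)*(W (j+1) k - 2*W j k + W (j-1) k)) * (starRingEnd ℂ) (W j k))
          + (((hx*hy : ℝ)):ℂ)/12 * ((W j (k+1) - 2*W j k + W j (k-1)) * (starRingEnd ℂ) (W j k))))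
      + ∑ k ∈ Finset.Icc 1 (K-1),
        ((((hx*hy : ℝ)):ℂ) * (((1/12:ℂ)*W (J-1) k + (5/12:ℂ)*W J k) * (starRingEnd ℂ) (W J k))
          + (((hx*hy : ℝ)):ℂ)/24 * ((W J (k+1) - 2*W J k + W J (k-1)) * (starRingEnd ℂ) (W J k)))
    = (∑ k ∈ Finset.Icc 1 (K-1), (((hx*hy : ℝ)):ℂ) *
        ((∑ j ∈ Finset.Icc 1 (J-1),
            (W j k + (1/12:ℂ)*(W (j+1) k - 2*W j k + W (j-1) k)) * (starRingEnd ℂ) (W j k))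
          + ((1/12:ℂ)*W (J-1) k + (5/12:ℂ)*W J k) * (starRingEnd ℂ) (W J k)))
      + (((hx*hy : ℝ)):ℂ)/12 * (∑ j ∈ Finset.Icc 1 (J-1), ∑ k ∈ Finset.Icc 1 (K-1),
          (W j (k+1) - 2*W j k + W j (k-1)) * (starRingEnd ℂ) (W j k))
      + (((hx*hy : ℝ)):ℂ)/24 * (∑ k ∈ Finset.Icc 1 (K-1),
          (W J (k+1) - 2*W J k + W J (k-1)) * (starRingEnd ℂ) (W J k)) := by
  simp only [Finset.sum_add_distrib, Finset.mul_sum, mul_add]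
  rw [Finset.sum_comm]
  ring


private lemma L3 (K J : ℕ) (c' : ℝ) (gx gy : ℕ → ℝ) :
    (∑ k ∈ Finset.Icc 1 (K-1), ((c' : ℝ):ℂ) * ((gx k : ℝ):ℂ))
      + ((c' : ℝ):ℂ)/12 * (∑ j ∈ Finset.Icc 1 (J-1), (-((gy j : ℝ):ℂ)))
      + ((c' : ℝ):ℂ)/24 * (-((gy J : ℝ):ℂ))
    = ((c' * ((∑ k ∈ Finset.Icc 1 (K-1), gx k) - 1/12*(∑ j ∈ Finset.Icc 1 (J-1), gy j)
        - 1/24*gy J) : ℝ) : ℂ) := by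
  norm_cast
  simp only [mul_neg, Finset.sum_neg_distrib, ← Finset.mul_sum]
  ring

/-- for every mesh function `W` vanishing at `j = 0`, `k = 0`, `k = K`,
the quantity `(W,W)_{ω̃_h, s_N}` is real and bounded below by
`(1/3)(‖W‖²_{ω_h} + (h_x/2)‖W_J‖²_{ω_{hy}})`. -/
theorem stmt15 (J K : ℕ) (hJ : 2 ≤ J) (hK : 2 ≤ K) (hx hy : ℝ)
    (hhx : 0 < hx) (hhy : 0 < hy) (W : ℕ → ℕ → ℂ)
    (hW0 : ∀ k, W 0 k = 0) (hWy0 : ∀ j, W j 0 = 0) (hWyK : ∀ j, W j K = 0) :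
    (innSN J K hx hy W W).im = 0 ∧
    1 / 3 * ((∑ j ∈ Finset.Icc 1 (J - 1), ∑ k ∈ Finset.Icc 1 (K - 1),
          ‖W j k‖ ^ 2 * (hx * hy))
        + hx / 2 * ∑ k ∈ Finset.Icc 1 (K - 1), ‖W J k‖ ^ 2 * hy)
      ≤ (innSN J K hx hy W W).re := by
  have hx0 : hx ≠ 0 := ne_of_gt hhx
  have hy0 : hy ≠ 0 := ne_of_gt hhy
  have hXk : ∀ k, ((∑ j ∈ Finset.Icc 1 (J-1),
        (W j k + (1/12:ℂ)*(W (j+1) k - 2*W j k + W (j-1) k)) * (starRingEnd ℂ) (W j k))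
      + ((1/12:ℂ)*W (J-1) k + (5/12:ℂ)*W J k) * (starRingEnd ℂ) (W J k))
    = ((((∑ j ∈ Finset.Icc 1 (J-1), ‖W j k‖^2) + 1/2*‖W J k‖^2
        - 1/12*∑ j ∈ Finset.Icc 1 J, ‖W j k - W (j-1) k‖^2 : ℝ)) : ℂ) := by
    intro k
    exact lemX (fun j => W j k) (hW0 k) J (by omega)
  have hYj : ∀ j, (∑ k ∈ Finset.Icc 1 (K-1),
        (W j (k+1) - 2*W j k + W j (k-1)) * (starRingEnd ℂ) (W j k))
      = -((((∑ k ∈ Finset.Icc 1 (K-1), ‖W j k - W j (k-1)‖^2) + ‖W j (K-1)‖^2 : ℝ)) : ℂ) := by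
    intro j
    exact lemY' (fun k => W j k) (hWy0 j) K (by omega) (hWyK j)
  have hmain : innSN J K hx hy W W
      = (((hx*hy) * ((∑ k ∈ Finset.Icc 1 (K-1),
            ((∑ j ∈ Finset.Icc 1 (J-1), ‖W j k‖^2) + 1/2*‖W J k‖^2
              - 1/12*∑ j ∈ Finset.Icc 1 J, ‖W j k - W (j-1) k‖^2))
          - 1/12*(∑ j ∈ Finset.Icc 1 (J-1),
            ((∑ k ∈ Finset.Icc 1 (K-1), ‖W j k - W j (k-1)‖^2) + ‖W j (K-1)‖^2))
          - 1/24*((∑ k ∈ Finset.Icc 1 (K-1), ‖W J k - W J (k-1)‖^2) + ‖W J (K-1)‖^2)) : ℝ) : ℂ) := by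
    rw [L1 J K hx hy hx0 hy0 W, L2 J K hx hy W]
    simp only [hXk, hYj]
    exact L3 K J (hx*hy)
      (fun k => (∑ j ∈ Finset.Icc 1 (J-1), ‖W j k‖^2) + 1/2*‖W J k‖^2
        - 1/12*∑ j ∈ Finset.Icc 1 J, ‖W j k - W (j-1) k‖^2)
      (fun j => (∑ k ∈ Finset.Icc 1 (K-1), ‖W j k - W j (k-1)‖^2) + ‖W j (K-1)‖^2)
  constructor
  · rw [hmain]; exact Complex.ofReal_im _
  · rw [hmain, Complex.ofReal_re]
    have e1 : (∑ j ∈ Finset.Icc 1 (J-1), ∑ k ∈ Finset.Icc 1 (K-1), ‖W j k‖^2*(hx*hy))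
        = (∑ j ∈ Finset.Icc 1 (J-1), ∑ k ∈ Finset.Icc 1 (K-1), ‖W j k‖^2)*(hx*hy) := by
      simp only [← Finset.sum_mul]
    have e2 : (∑ k ∈ Finset.Icc 1 (K-1), ‖W J k‖^2*hy)
        = (∑ k ∈ Finset.Icc 1 (K-1), ‖W J k‖^2)*hy := by
      simp only [← Finset.sum_mul]
    rw [e1, e2]
    have e3 : (∑ k ∈ Finset.Icc 1 (K-1),
          ((∑ j ∈ Finset.Icc 1 (J-1), ‖W j k‖^2) + 1/2*‖W J k‖^2
            - 1/12*∑ j ∈ Finset.Icc 1 J, ‖W j k - W (j-1) k‖^2))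
        = (∑ k ∈ Finset.Icc 1 (K-1), ∑ j ∈ Finset.Icc 1 (J-1), ‖W j k‖^2)
          + 1/2*(∑ k ∈ Finset.Icc 1 (K-1), ‖W J k‖^2)
          - 1/12*(∑ k ∈ Finset.Icc 1 (K-1), ∑ j ∈ Finset.Icc 1 J, ‖W j k - W (j-1) k‖^2) := by
      simp only [Finset.sum_add_distrib, Finset.sum_sub_distrib, ← Finset.mul_sum]
    rw [e3]
    have e4 : (∑ k ∈ Finset.Icc 1 (K-1), ∑ j ∈ Finset.Icc 1 (J-1), ‖W j k‖^2)
        = ∑ j ∈ Finset.Icc 1 (J-1), ∑ k ∈ Finset.Icc 1 (K-1), ‖W j k‖^2 := Finset.sum_comm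
    rw [e4]
    have bDX : (∑ k ∈ Finset.Icc 1 (K-1), ∑ j ∈ Finset.Icc 1 J, ‖W j k - W (j-1) k‖^2)
        ≤ 4*(∑ j ∈ Finset.Icc 1 (J-1), ∑ k ∈ Finset.Icc 1 (K-1), ‖W j k‖^2)
          + 2*(∑ k ∈ Finset.Icc 1 (K-1), ‖W J k‖^2) := by
      calc (∑ k ∈ Finset.Icc 1 (K-1), ∑ j ∈ Finset.Icc 1 J, ‖W j k - W (j-1) k‖^2)
          ≤ ∑ k ∈ Finset.Icc 1 (K-1),
              (4*(∑ j ∈ Finset.Icc 1 (J-1), ‖W j k‖^2) + 2*‖W J k‖^2) :=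
            Finset.sum_le_sum (fun k _ => lemIneqX (fun j => W j k) (hW0 k) J (by omega))
        _ = 4*(∑ k ∈ Finset.Icc 1 (K-1), ∑ j ∈ Finset.Icc 1 (J-1), ‖W j k‖^2)
            + 2*(∑ k ∈ Finset.Icc 1 (K-1), ‖W J k‖^2) := by
            simp only [Finset.sum_add_distrib, ← Finset.mul_sum]
        _ = 4*(∑ j ∈ Finset.Icc 1 (J-1), ∑ k ∈ Finset.Icc 1 (K-1), ‖W j k‖^2)
            + 2*(∑ k ∈ Finset.Icc 1 (K-1), ‖W J k‖^2) := by rw [e4]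
    have bY : (∑ j ∈ Finset.Icc 1 (J-1),
          ((∑ k ∈ Finset.Icc 1 (K-1), ‖W j k - W j (k-1)‖^2) + ‖W j (K-1)‖^2))
        ≤ 4*(∑ j ∈ Finset.Icc 1 (J-1), ∑ k ∈ Finset.Icc 1 (K-1), ‖W j k‖^2) := by
      calc (∑ j ∈ Finset.Icc 1 (J-1),
            ((∑ k ∈ Finset.Icc 1 (K-1), ‖W j k - W j (k-1)‖^2) + ‖W j (K-1)‖^2))
          ≤ ∑ j ∈ Finset.Icc 1 (J-1), 4*(∑ k ∈ Finset.Icc 1 (K-1), ‖W j k‖^2) :=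
            Finset.sum_le_sum (fun j _ => lemIneqY (fun k => W j k) (hWy0 j) K hK)
        _ = 4*(∑ j ∈ Finset.Icc 1 (J-1), ∑ k ∈ Finset.Icc 1 (K-1), ‖W j k‖^2) := by
            simp only [← Finset.mul_sum]
    have bYJ : ((∑ k ∈ Finset.Icc 1 (K-1), ‖W J k - W J (k-1)‖^2) + ‖W J (K-1)‖^2)
        ≤ 4*(∑ k ∈ Finset.Icc 1 (K-1), ‖W J k‖^2) :=
      lemIneqY (fun k => W J k) (hWy0 J) K hK
    have hc : (0:ℝ) < hx*hy := mul_pos hhx hhy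
    nlinarith [mul_le_mul_of_nonneg_left bDX hc.le, mul_le_mul_of_nonneg_left bY hc.le,
      mul_le_mul_of_nonneg_left bYJ hc.le]
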